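/- arXiv:1104.5052 — 6 statements merged into one kernel-verified Lean document; each statement's English description precedes it below -/
import Mathlib

section
/- For a positive integer n, every invertible element of ℤ/nℤ squares to 1 (equivalently, 1's appear only on the diagonal of the multiplication table of ℤ/nℤ) if and only if n divides 24. -/
theorem units_sq_one_iff_dvd_24 (n : ℕ) (hn : 0 < n) :
    (∀ a : (ZMod n)ˣ, a ^ 2 = 1) ↔ n ∣ 24 := by
  constructor
  · intro h
    have h5 : ¬ (5 ∣ n) := by
      intro hd
      have : NeZero n := ⟨hn.ne'⟩
      obtain ⟨b, hb⟩ := ZMod.unitsMap_surjective hd (ZMod.unitOfCoprime 2 (by decide))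
      have h2 := congrArg (ZMod.unitsMap hd) (h b)
      rw [map_pow, hb, map_one] at h2
      exact absurd h2 (by decide)
    have hco : Nat.Coprime 5 n := (Nat.Prime.coprime_iff_not_dvd (by norm_num)).mpr h5
    have ha := h (ZMod.unitOfCoprime 5 hco)
    have hv : ((5 : ZMod n)) ^ 2 = 1 := by
      have := congrArg (Units.val) ha
      simpa using this
    have h25 : ((25 : ℕ) : ZMod n) = ((1 : ℕ) : ZMod n) := by push_cast; linear_combination hv
    have := (ZMod.natCast_eq_natCast_iff 25 1 n).mp h25
    have := (Nat.modEq_iff_dvd' (by norm_num)).mp this.symm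
    simpa using this
  · intro h
    have h24 : n ≤ 24 := Nat.le_of_dvd (by norm_num) h
    interval_cases n <;> first | (exfalso; omega) | decide
end

section
/- For a positive integer n, the condition that n divides a² − 1 for every integer a with gcd(a, n) = 1 holds if and only if n divides p² − 1 for every prime number p that does not divide n. -/
theorem coprime_dvd_iff_prime_dvd (n : ℕ) (hn : 0 < n) :
    (∀ a : ℤ, Int.gcd a n = 1 → (n : ℤ) ∣ a ^ 2 - 1) ↔
      ∀ p : ℕ, p.Prime → ¬ p ∣ n → (n : ℤ) ∣ (p : ℤ) ^ 2 - 1 := by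
  constructor
  · intro h p hp hpn
    refine h p ?_
    rw [Int.gcd_natCast_natCast]
    exact (Nat.Prime.coprime_iff_not_dvd hp).mpr hpn
  · intro h a ha
    have : NeZero n := ⟨hn.ne'⟩
    have hu : IsUnit ((a : ZMod n)) := by
      obtain ⟨u, v, huv⟩ := Int.isCoprime_iff_gcd_eq_one.mpr ha
      refine IsUnit.of_mul_eq_one (u : ZMod n) ?_
      have := congrArg (Int.cast : ℤ → ZMod n) huv
      push_cast at this
      simpa [ZMod.natCast_self, mul_comm] using this
    obtain ⟨p, hpn, hp, hpa⟩ := Nat.forall_exists_prime_gt_and_eq_mod hu n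
    have hnd : ¬ p ∣ n := fun hd => absurd (Nat.le_of_dvd hn hd) (not_le.mpr hpn)
    have hd := h p hp hnd
    rw [← ZMod.intCast_zmod_eq_zero_iff_dvd] at hd ⊢
    push_cast at hd ⊢
    rw [hpa] at hd
    exact hd
end

section
/- If a positive integer n has the property that n divides p² − 1 for every prime p not dividing n, then n divides 24. -/
theorem diagonal_property_dvd_24 (n : ℕ) (hn : 0 < n)
    (h : ∀ p : ℕ, p.Prime → ¬ p ∣ n → (n : ℤ) ∣ (p : ℤ) ^ 2 - 1) :
    n ∣ 24 := by
  haveI : NeZero n := ⟨hn.ne'⟩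
  -- Every unit of ZMod n squares to 1, by Dirichlet's theorem
  have key : ∀ u : (ZMod n)ˣ, u ^ 2 = 1 := by
    intro u
    obtain ⟨p, -, hp, hpe⟩ :=
      Nat.forall_exists_prime_gt_and_eq_mod (a := (u : ZMod n)) u.isUnit 0
    have hpn : ¬ p ∣ n := by
      rw [← Nat.Prime.coprime_iff_not_dvd hp, ← ZMod.isUnit_iff_coprime]
      exact hpe ▸ u.isUnit
    have hd := h p hp hpn
    have h0 : ((((p : ℤ) ^ 2 - 1 : ℤ)) : ZMod n) = 0 :=
      (ZMod.intCast_zmod_eq_zero_iff_dvd _ _).mpr hd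
    push_cast at h0
    have hsq : (p : ZMod n) ^ 2 = 1 := by linear_combination h0
    ext
    push_cast
    rw [hpe] at hsq
    exact hsq
  -- so every unit mod any divisor m of n squares to 1
  have key2 : ∀ m : ℕ, m ∣ n → ∀ v : (ZMod m)ˣ, v ^ 2 = 1 := by
    intro m hm v
    obtain ⟨u, rfl⟩ := ZMod.unitsMap_surjective hm v
    rw [← map_pow, key u, map_one]
  rw [Nat.dvd_iff_prime_pow_dvd_dvd 24 n]
  intro p k hp hpk
  rcases Nat.eq_zero_or_pos k with rfl | hk
  · simp
  have hpn : p ∣ n := dvd_trans (dvd_pow_self p hk.ne') hpk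
  rcases lt_or_ge p 5 with hps | hps
  · interval_cases p
    · exact absurd hp (by decide)
    · exact absurd hp (by decide)
    · -- p = 2 : show k ≤ 3
      have hk3 : k ≤ 3 := by
        by_contra hk3
        push_neg at hk3
        have h16 : (16 : ℕ) ∣ n :=
          dvd_trans (by have : 2 ^ 4 ∣ 2 ^ k := pow_dvd_pow 2 hk3; simpa using this) hpk
        have := key2 16 h16 (ZMod.unitOfCoprime 3 (by decide))
        exact absurd this (by decide)
      have : (2 : ℕ) ^ k ∣ 2 ^ 3 := pow_dvd_pow 2 hk3
      exact this.trans (by norm_num)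
    · -- p = 3 : show k ≤ 1
      have hk1 : k ≤ 1 := by
        by_contra hk1
        push_neg at hk1
        have h9 : (9 : ℕ) ∣ n :=
          dvd_trans (by have : 3 ^ 2 ∣ 3 ^ k := pow_dvd_pow 3 hk1; simpa using this) hpk
        have := key2 9 h9 (ZMod.unitOfCoprime 2 (by decide))
        exact absurd this (by decide)
      have : (3 : ℕ) ^ k ∣ 3 ^ 1 := pow_dvd_pow 3 hk1
      exact this.trans (by norm_num)
    · exact absurd hp (by decide)
  · -- p ≥ 5 prime divides n : contradiction
    exfalso
    haveI : Fact p.Prime := ⟨hp⟩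
    obtain ⟨g, hg⟩ := IsCyclic.exists_generator (α := (ZMod p)ˣ)
    have hog : orderOf g = p - 1 := by
      rw [orderOf_eq_card_of_forall_mem_zpowers hg, Nat.card_eq_fintype_card,
        ZMod.card_units_eq_totient, Nat.totient_prime hp]
    have hg2 := key2 p hpn g
    have : orderOf g ∣ 2 := orderOf_dvd_of_pow_eq_one hg2
    rw [hog] at this
    have := Nat.le_of_dvd (by norm_num) this
    omega
end

section
/- If a positive integer n has the diagonal property, then every prime divisor of n is at most 3; that is, n = 2^u · 3^v for some nonnegative integers u and v. -/
lemma aux_two_three : ∀ n : ℕ, 0 < n → (∀ q : ℕ, q.Prime → q ∣ n → q ≤ 3) →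
    ∃ u v : ℕ, n = 2 ^ u * 3 ^ v := by
  intro n
  induction n using Nat.strong_induction_on with
  | _ n ih =>
    intro hn hq
    rcases eq_or_lt_of_le (Nat.succ_le_of_lt hn) with h1 | h1
    · exact ⟨0, 0, by omega⟩
    have hmf : n.minFac.Prime := Nat.minFac_prime (by omega)
    have hdvd : n.minFac ∣ n := Nat.minFac_dvd n
    obtain ⟨m, hm⟩ := hdvd
    have hm0 : 0 < m := by
      rcases Nat.eq_zero_or_pos m with h | h
      · subst h; simp at hm; omega
      · exact h
    have hmlt : m < n := by
      have := hmf.two_le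
      nlinarith
    obtain ⟨u, v, huv⟩ := ih m hmlt hm0 (fun q hq' hdq => hq q hq' (hm ▸ hdq.mul_left _))
    have h3 := hq n.minFac hmf (Nat.minFac_dvd n)
    interval_cases h : n.minFac
    · exact absurd hmf (by norm_num)
    · exact absurd hmf (by norm_num)
    · exact ⟨u + 1, v, by rw [hm, huv]; ring⟩
    · exact ⟨u, v + 1, by rw [hm, huv]; ring⟩

theorem diagonal_property_eq_two_pow_mul_three_pow (n : ℕ) (hn : 0 < n)
    (h : ∀ p : ℕ, p.Prime → ¬ p ∣ n → (n : ℤ) ∣ (p : ℤ) ^ 2 - 1) :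
    ∃ u v : ℕ, n = 2 ^ u * 3 ^ v := by
  apply aux_two_three n hn
  intro q hq hqn
  by_contra hq3
  push_neg at hq3
  have hn1 : 1 < n := lt_of_lt_of_le hq.one_lt (Nat.le_of_dvd hn hqn)
  haveI : NeZero n := ⟨by omega⟩
  haveI : Fact q.Prime := ⟨hq⟩
  -- 2 is a unit in ZMod q
  have h2 : IsUnit (2 : ZMod q) := by
    apply isUnit_iff_ne_zero.mpr
    intro h0
    have : (q : ℕ) ∣ 2 := (ZMod.natCast_eq_zero_iff 2 q).mp (by exact_mod_cast h0)
    have := Nat.le_of_dvd (by norm_num) this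
    omega
  obtain ⟨w, hw⟩ := ZMod.unitsMap_surjective hqn h2.unit
  obtain ⟨p, hpn, hp, hpw⟩ := Nat.forall_exists_prime_gt_and_eq_mod (a := (w : ZMod n))
    w.isUnit n
  have hpndvd : ¬ p ∣ n := fun hd => by
    have := Nat.le_of_dvd hn hd; omega
  have hdiv := h p hp hpndvd
  -- reduce mod q
  have hq_int : (q : ℤ) ∣ (p : ℤ) ^ 2 - 1 := dvd_trans (by exact_mod_cast hqn) hdiv
  have hzq : ((p : ZMod q)) ^ 2 = 1 := by
    have := (ZMod.intCast_zmod_eq_zero_iff_dvd ((p : ℤ) ^ 2 - 1) q).mpr hq_int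
    push_cast at this
    linear_combination this
  -- p ≡ 2 mod q
  have hp2 : (p : ZMod q) = 2 := by
    have h1 : (ZMod.cast ((p : ZMod n)) : ZMod q) = (p : ZMod q) := ZMod.cast_natCast hqn p
    have h2' : (ZMod.cast ((w : ZMod n)) : ZMod q) = (2 : ZMod q) := by
      have := congrArg (fun u : (ZMod q)ˣ => (u : ZMod q)) hw
      simpa [ZMod.unitsMap_def, Units.coe_map, ZMod.castHom_apply, IsUnit.unit_spec] using this
    rw [← h1, hpw, h2']
  rw [hp2] at hzq
  have h3 : (3 : ZMod q) = 0 := by linear_combination hzq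
  have : (q : ℕ) ∣ 3 := by exact_mod_cast (ZMod.natCast_eq_zero_iff 3 q).mp (by exact_mod_cast h3)
  have := Nat.le_of_dvd (by norm_num) this
  omega
end

section
/- Let n be a positive integer with the diagonal property, and let p be a prime with p² < n + 1 (equivalently, p < √(n+1)). Then p divides n. -/
theorem small_prime_dvd_of_diagonal (n : ℕ) (hn : 0 < n)
    (h : ∀ p : ℕ, p.Prime → ¬ p ∣ n → (n : ℤ) ∣ (p : ℤ) ^ 2 - 1)
    (p : ℕ) (hp : p.Prime) (hlt : p ^ 2 < n + 1) :
    p ∣ n := by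
  by_contra hpn
  have hd := h p hp hpn
  have h2 : 2 ≤ p := hp.two_le
  have hpos : (0:ℤ) < (p:ℤ) ^ 2 - 1 := by
    have : (2:ℤ) ≤ (p:ℤ) := by exact_mod_cast h2
    nlinarith
  have hle : (n:ℤ) ≤ (p:ℤ) ^ 2 - 1 := Int.le_of_dvd hpos hd
  have : p ^ 2 ≤ n := Nat.lt_succ_iff.mp hlt
  have : ((p:ℤ)) ^ 2 ≤ (n:ℤ) := by exact_mod_cast this
  linarith
end

section
/- If a positive integer n has the diagonal property, then n ≤ 24. -/
theorem diagonal_property_le_24 (n : ℕ) (hn : 0 < n)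
    (h : ∀ p : ℕ, p.Prime → ¬ p ∣ n → (n : ℤ) ∣ (p : ℤ) ^ 2 - 1) :
    n ≤ 24 := by
  by_cases h2 : (2 : ℕ) ∣ n
  · by_cases h3 : (3 : ℕ) ∣ n
    · by_cases h5 : (5 : ℕ) ∣ n
      · -- contradiction: find prime p ≡ 2 mod 5 coprime to n
        exfalso
        haveI : NeZero n := ⟨hn.ne'⟩
        set k := n.factorization 5 with hk
        have hk0 : 0 < k := Nat.Prime.factorization_pos_of_dvd (by norm_num) hn.ne' h5
        set m := ordCompl[5] n with hm
        have hco : Nat.Coprime (5 ^ k) m :=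
          Nat.Coprime.pow_left _ (Nat.coprime_ordCompl (by norm_num) hn.ne')
        obtain ⟨x, hx1, hx2⟩ := Nat.chineseRemainder hco 2 1
        have h5k : (5 : ℕ) ∣ 5 ^ k := dvd_pow_self 5 hk0.ne'
        have hx5 : x ≡ 2 [MOD 5] := (hx1.of_dvd h5k)
        have hcx5 : Nat.Coprime x (5 ^ k) := by
          refine Nat.Coprime.pow_right _ ?_
          have : ¬ (5 : ℕ) ∣ x := by
            intro hdvd
            have := hx5
            unfold Nat.ModEq at this
            omega
          exact (Nat.coprime_comm.mp ((Nat.Prime.coprime_iff_not_dvd (by norm_num)).mpr this))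
        have hcxm : Nat.Coprime x m :=
          Nat.coprime_of_mul_modEq_one 1 (by simpa using hx2)
        have hcxn : Nat.Coprime x n := by
          have := Nat.Coprime.mul_right hcx5 hcxm
          rwa [Nat.ordProj_mul_ordCompl_eq_self n 5] at this
        have ha : IsUnit ((x : ZMod n)) := (ZMod.isUnit_iff_coprime x n).mpr hcxn
        obtain ⟨p, -, hp, hpx⟩ := Nat.forall_exists_prime_gt_and_eq_mod ha 0
        have hpn : ¬ p ∣ n := by
          have hu : IsUnit ((p : ZMod n)) := hpx ▸ ha
          exact (Nat.Prime.coprime_iff_not_dvd hp).mp ((ZMod.isUnit_iff_coprime p n).mp hu)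
        have hd : (n : ℤ) ∣ (p : ℤ) ^ 2 - 1 := h p hp hpn
        have h5d : (5 : ℤ) ∣ (p : ℤ) ^ 2 - 1 :=
          dvd_trans (by exact_mod_cast Int.natCast_dvd_natCast.mpr h5) hd
        have hpm : p ≡ x [MOD n] := (ZMod.natCast_eq_natCast_iff p x n).mp hpx
        have h5n : (5 : ℕ) ∣ n := h5
        have hp5 : p % 5 = 2 := by
          have := (hpm.of_dvd h5n).trans hx5
          unfold Nat.ModEq at this
          omega
        obtain ⟨s, hs⟩ : ∃ s : ℕ, p = 5 * s + 2 := ⟨p / 5, by omega⟩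
        have key : ((p : ℤ) ^ 2 - 1) - 5 * (5 * (s : ℤ) ^ 2 + 4 * s) = 3 := by
          rw [hs]; push_cast; ring
        have : (5 : ℤ) ∣ 3 := key ▸ dvd_sub h5d (Dvd.intro _ rfl)
        norm_num at this
      · have hd := h 5 (by norm_num) h5
        have : (n : ℤ) ∣ 24 := by norm_num at hd ⊢; exact hd
        exact_mod_cast Int.le_of_dvd (by norm_num) this
    · have hd := h 3 (by norm_num) h3
      have : (n : ℤ) ∣ 8 := by norm_num at hd ⊢; exact hd
      have := Int.le_of_dvd (by norm_num) this
      omega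
  · have hd := h 2 (by norm_num) h2
    have : (n : ℤ) ∣ 3 := by norm_num at hd ⊢; exact hd
    have := Int.le_of_dvd (by norm_num) this
    omega
end
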